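/- Suppose there exist A ∈ GL_D(R) and B ∈ GL_D(Z) with Λ₀A = Λ̃₀, AẼ = E, Λ₁B = Λ̃₁, BR̃ = R. Then Λ₀E = Λ̃₀Ẽ and Λ₁R = Λ̃₁R̃, and the map φ(ξ)(x,k) = ξ(Ax, Bk) is an isomorphism of left A^D_{ħ,q}(F)-modules S_ħ^δ(Λ₀,E,Λ₁,R) ≅ S_ħ^δ(Λ̃₀,Ẽ,Λ̃₁,R̃). -/

import Mathlib

open scoped BigOperators

noncomputable section

abbrev V (D : ℕ) := Fin D → ℝ
abbrev L (D : ℕ) := Fin D → ℤ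

def cz {D : ℕ} (n : L D) : V D := fun i => (n i : ℝ)

def Nr (D : ℕ) (x y : Fin D → ℝ) : ℝ :=
  ∑ m : Fin D, ∑ n : Fin D, if (n : ℕ) < (m : ℕ) then x m * y n else 0

def Nz (D : ℕ) (k l : L D) : ℤ :=
  ∑ m : Fin D, ∑ n : Fin D, if (n : ℕ) < (m : ℕ) then k m * l n else 0

def Sh (D : ℕ) (hb : ℝ) (k : L D) (f : V D → ℂ) : V D → ℂ :=
  fun u => f (fun i => u i + hb * (k i : ℝ))

abbrev Alg (D : ℕ) := (L D) →₀ ((V D) → ℂ)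

def amul (D : ℕ) (hb : ℝ) (q : ℂ) (a b : Alg D) : Alg D :=
  a.sum fun k f => b.sum fun l g =>
    Finsupp.single (k + l) ((q ^ (Nz D k l)) • (f * Sh D hb k g))

def astar (D : ℕ) (hb : ℝ) (q : ℂ) (a : Alg D) : Alg D :=
  a.sum fun k f => Finsupp.single (-k) ((q ^ (Nz D (-k) (-k))) • Sh D hb (-k) (star f))

structure GoodF (D : ℕ) (hb : ℝ) (F : Set (V D → ℂ)) : Prop where
  zero_mem : (0 : V D → ℂ) ∈ F
  add_mem : ∀ f ∈ F, ∀ g ∈ F, f + g ∈ F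
  mul_mem : ∀ f ∈ F, ∀ g ∈ F, f * g ∈ F
  smul_mem : ∀ (c : ℂ), ∀ f ∈ F, c • f ∈ F
  star_mem : ∀ f ∈ F, star f ∈ F
  shift_mem : ∀ (k : L D), ∀ f ∈ F, Sh D hb k f ∈ F

def SeparatesPts (D : ℕ) (F : Set (V D → ℂ)) : Prop :=
  ∀ x y : V D, x ≠ y → ∃ f ∈ F, f x ≠ f y


def Phi (D : ℕ) (Λ₀ Λ₁ : Matrix (Fin D) (Fin D) ℝ) (δ : V D) (x : V D) (k : L D) : V D :=
  Λ₀.mulVec x + Λ₁.mulVec (cz k) + δ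

def cact (D : ℕ) (hb : ℝ) (q : ℂ) (Λ₀ Λ₁ E : Matrix (Fin D) (Fin D) ℝ)
    (R : Matrix (Fin D) (Fin D) ℤ) (δ : V D)
    (a : Alg D) (ξ : V D × L D → ℂ) : V D × L D → ℂ :=
  fun p => a.sum fun n f =>
    (q ^ (((Nr D (Phi D Λ₀ Λ₁ δ p.1 p.2) (cz n) : ℝ) : ℂ))) *
      f (hb • Phi D Λ₀ Λ₁ δ p.1 p.2) *
      ξ (p.1 + E.mulVec (cz n), p.2 + R.mulVec n)

structure FInvariant (D : ℕ) (F : Set (V D → ℂ)) (S : Submodule ℂ (V D × L D → ℂ)) : Prop where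
  fmul : ∀ f ∈ F, ∀ ξ ∈ S, (fun p : V D × L D => f p.1 * ξ p) ∈ S
  transl : ∀ (lam : V D) (r : L D), ∀ ξ ∈ S, (fun p : V D × L D => ξ (p.1 + lam, p.2 + r)) ∈ S
  phase : ∀ (lam : V D), ∀ ξ ∈ S,
    (fun p : V D × L D => Complex.exp (Complex.I * ((∑ i, lam i * p.1 i : ℝ) : ℂ)) * ξ p) ∈ S

/-- The map `φ(ξ)(x,k) = ξ(Ax, Bk)`. -/
def phiAB (D : ℕ) (A : Matrix (Fin D) (Fin D) ℝ) (B : Matrix (Fin D) (Fin D) ℤ)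
    (ξ : V D × L D → ℂ) : V D × L D → ℂ :=
  fun p => ξ (A.mulVec p.1, B.mulVec p.2)


section Aux34
variable {D : ℕ}

lemma cz_mulVec34 (B : Matrix (Fin D) (Fin D) ℤ) (k : L D) :
    cz (B.mulVec k) = (B.map (Int.cast : ℤ → ℝ)).mulVec (cz k) := by
  funext i
  simp only [cz, Matrix.mulVec, dotProduct, Matrix.map_apply]
  push_cast
  rfl

end Aux34

/-- Lemma 3.4: if `A ∈ GL_D(ℝ)` and `B ∈ GL_D(ℤ)` satisfy `Λ₀A = Λ̃₀`, `AẼ = E`,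
`Λ₁B = Λ̃₁`, `BR̃ = R`, then `Λ₀E = Λ̃₀Ẽ`, `Λ₁R = Λ̃₁R̃`, and `φ(ξ)(x,k) = ξ(Ax,Bk)` is a
left module isomorphism `S_ħ^δ(Λ₀,E,Λ₁,R) ≃ S_ħ^δ(Λ̃₀,Ẽ,Λ̃₁,R̃)`. -/
theorem stmt7 (D : ℕ) (hb : ℝ) (hhb : 0 < hb) (q : ℂ) (hq : ‖q‖ = 1)
    (F : Set (V D → ℂ)) (hF : GoodF D hb F)
    (Λ₀ Λ₁ E Λ₀' Λ₁' E' : Matrix (Fin D) (Fin D) ℝ)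
    (R R' : Matrix (Fin D) (Fin D) ℤ) (δ : V D)
    (hcomp : Λ₀ * E + Λ₁ * R.map (Int.cast : ℤ → ℝ) = 1)
    (hcomp' : Λ₀' * E' + Λ₁' * R'.map (Int.cast : ℤ → ℝ) = 1)
    (A : Matrix (Fin D) (Fin D) ℝ) (hA : IsUnit A.det)
    (B : Matrix (Fin D) (Fin D) ℤ) (hB : IsUnit B.det)
    (h1 : Λ₀ * A = Λ₀') (h2 : A * E' = E)
    (h3 : Λ₁ * B.map (Int.cast : ℤ → ℝ) = Λ₁') (h4 : B * R' = R) :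
    Λ₀ * E = Λ₀' * E' ∧
    Λ₁ * R.map (Int.cast : ℤ → ℝ) = Λ₁' * R'.map (Int.cast : ℤ → ℝ) ∧
    IsLinearMap ℂ (phiAB D A B) ∧
    Function.Bijective (phiAB D A B) ∧
    (∀ a : Alg D, (∀ k, a k ∈ F) → ∀ ξ : V D × L D → ℂ,
      phiAB D A B (cact D hb q Λ₀ Λ₁ E R δ a ξ) =
        cact D hb q Λ₀' Λ₁' E' R' δ a (phiAB D A B ξ)) := by
  refine ⟨?_, ?_, ?_, ?_, ?_⟩
  · rw [← h2, ← Matrix.mul_assoc, h1]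
  · have hR : R.map (Int.cast : ℤ → ℝ) = B.map Int.cast * R'.map Int.cast := by
      rw [← h4]; ext i j
      simp [Matrix.mul_apply, Matrix.map_apply]
    rw [hR, ← Matrix.mul_assoc, h3]
  · exact ⟨fun ξ η => rfl, fun c ξ => rfl⟩
  · refine Function.bijective_iff_has_inverse.2 ⟨phiAB D A⁻¹ B⁻¹, ?_, ?_⟩
    · intro ξ; funext p
      simp only [phiAB, Matrix.mulVec_mulVec, Matrix.mul_nonsing_inv A hA,
        Matrix.mul_nonsing_inv B hB, Matrix.one_mulVec]
    · intro ξ; funext p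
      simp only [phiAB, Matrix.mulVec_mulVec, Matrix.nonsing_inv_mul A hA,
        Matrix.nonsing_inv_mul B hB, Matrix.one_mulVec]
  · intro a ha ξ
    funext p
    show (cact D hb q Λ₀ Λ₁ E R δ a ξ) (A.mulVec p.1, B.mulVec p.2) = _
    unfold cact
    refine Finsupp.sum_congr fun n hn => ?_
    have hPhi : Phi D Λ₀ Λ₁ δ (A.mulVec p.1) (B.mulVec p.2) = Phi D Λ₀' Λ₁' δ p.1 p.2 := by
      unfold Phi
      rw [cz_mulVec34, Matrix.mulVec_mulVec, Matrix.mulVec_mulVec, h1, h3]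
    have hE : A.mulVec (p.1 + E'.mulVec (cz n)) = A.mulVec p.1 + E.mulVec (cz n) := by
      rw [Matrix.mulVec_add, Matrix.mulVec_mulVec, h2]
    have hRv : B.mulVec (p.2 + R'.mulVec n) = B.mulVec p.2 + R.mulVec n := by
      rw [Matrix.mulVec_add, Matrix.mulVec_mulVec, h4]
    simp only [phiAB, hPhi, hE, hRv]
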